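/- Let X be a perfectly paracompact hereditarily Baire topological space and Y any topological space. A map f : X → Y is weakly discontinuous if and only if f is piecewise continuous. -/

import Mathlib

open Set Topology

/-- A map `f : X → Y` is *weakly discontinuous* if for every non-empty subset `A ⊆ X`
the set of discontinuity points of the restriction `f|A` is nowhere dense in the
subspace `A`. -/
def WeaklyDiscontinuous {X Y : Type*} [TopologicalSpace X] [TopologicalSpace Y]
    (f : X → Y) : Prop :=
  ∀ A : Set X, A.Nonempty →
    IsNowhereDense {a : A | ¬ ContinuousWithinAt f A (a : X)}

/-- A map `f : X → Y` is *piecewise continuous* if `X` has a countable closed cover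
such that the restriction of `f` to each member of the cover is continuous. -/
def PiecewiseContinuous {X Y : Type*} [TopologicalSpace X] [TopologicalSpace Y]
    (f : X → Y) : Prop :=
  ∃ C : Set (Set X), C.Countable ∧ (∀ c ∈ C, IsClosed c) ∧ ⋃₀ C = Set.univ ∧
    ∀ c ∈ C, ContinuousOn f c


section Aux

set_option linter.unusedVariables false


universe u v

variable {X : Type u} {Y : Type v} [TopologicalSpace X] [TopologicalSpace Y]

/-- Discontinuity set of `f` restricted to `S`, as a subset of `X`. -/
def dset (f : X → Y) (S : Set X) : Set X := {x | x ∈ S ∧ ¬ ContinuousWithinAt f S x}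

theorem dset_mono (f : X → Y) {S T : Set X} (h : S ⊆ T) : dset f S ⊆ dset f T := by
  rintro x ⟨hxS, hx⟩
  exact ⟨h hxS, fun hc => hx (hc.mono h)⟩

def gmap (f : X → Y) (S : Set X) : Set X := S ∩ closure (dset f S)

theorem gmap_subset (f : X → Y) (S : Set X) : gmap f S ⊆ S := inter_subset_left

theorem gmap_mono (f : X → Y) {S T : Set X} (h : S ⊆ T) : gmap f S ⊆ gmap f T :=
  inter_subset_inter h (closure_mono (dset_mono f h))

theorem gmap_isClosed (f : X → Y) {S : Set X} (hS : IsClosed S) : IsClosed (gmap f S) :=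
  hS.inter isClosed_closure

def chain (f : X → Y) (a : Ordinal.{u}) : Set X :=
  ⋂₀ { S | ∃ (b : Ordinal.{u}) (h : b < a), S = gmap f (chain f b) }
termination_by a
decreasing_by exact h

theorem mem_chain_iff {f : X → Y} {a : Ordinal.{u}} {x : X} :
    x ∈ chain f a ↔ ∀ b < a, x ∈ gmap f (chain f b) := by
  rw [chain]
  constructor
  · intro h b hb
    exact h _ ⟨b, hb, rfl⟩
  · rintro h S ⟨b, hb, rfl⟩
    exact h b hb

theorem chain_antitone {f : X → Y} {a b : Ordinal.{u}} (h : a ≤ b) :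
    chain f b ⊆ chain f a := by
  intro x hx
  rw [mem_chain_iff] at hx ⊢
  exact fun c hc => hx c (lt_of_lt_of_le hc h)

theorem chain_isClosed (f : X → Y) (a : Ordinal.{u}) : IsClosed (chain f a) := by
  induction a using Ordinal.induction with
  | _ a IH =>
    rw [chain]
    apply isClosed_sInter
    rintro S ⟨b, hb, rfl⟩
    exact gmap_isClosed f (IH b hb)

theorem chain_succ_subset (f : X → Y) (a : Ordinal.{u}) :
    chain f (Order.succ a) ⊆ gmap f (chain f a) := fun x hx =>
  mem_chain_iff.1 hx a (Order.lt_succ a)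

theorem not_mem_gmap_of_succ {f : X → Y} {a : Ordinal.{u}} {x : X}
    (hx : x ∈ chain f a) (hx' : x ∉ chain f (Order.succ a)) :
    x ∉ gmap f (chain f a) := by
  intro hg
  apply hx'
  rw [mem_chain_iff]
  intro b hb
  rcases (Order.lt_succ_iff.1 hb).lt_or_eq with h | rfl
  · exact mem_chain_iff.1 hx b h
  · exact hg

theorem continuousWithinAt_of_not_mem_gmap {f : X → Y} {S : Set X} {x : X}
    (hx : x ∈ S) (hg : x ∉ gmap f S) : ContinuousWithinAt f S x := by
  by_contra hc
  exact hg ⟨hx, subset_closure ⟨hx, hc⟩⟩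

/-- From weak discontinuity: a non-empty set is never contained in the closure of its
discontinuity set. -/
theorem not_subset_closure_dset {f : X → Y} (hwd : WeaklyDiscontinuous f)
    {S : Set X} (hS : S.Nonempty) : ¬ S ⊆ closure (dset f S) := by
  intro hsub
  have hnwd := hwd S hS
  have himg : Subtype.val '' {a : S | ¬ ContinuousWithinAt f S (a : X)} = dset f S := by
    ext x
    constructor
    · rintro ⟨⟨y, hy⟩, hmem, rfl⟩
      exact ⟨hy, hmem⟩
    · rintro ⟨hxS, hx⟩
      exact ⟨⟨x, hxS⟩, hx, rfl⟩
  have hcl : closure {a : S | ¬ ContinuousWithinAt f S (a : X)} = univ := by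
    rw [IsInducing.subtypeVal.closure_eq_preimage_closure_image, himg]
    exact eq_univ_of_forall fun y => hsub y.2
  rw [IsNowhereDense, hcl, interior_univ] at hnwd
  have : Nonempty S := hS.to_subtype
  exact (univ_nonempty).ne_empty hnwd

theorem exists_chain_empty {f : X → Y} (hwd : WeaklyDiscontinuous f) :
    ∃ a : Ordinal.{u}, chain f a = ∅ := by
  by_contra h
  push_neg at h
  have hlt : ∀ a b : Ordinal.{u}, a < b → chain f a = chain f b → False := by
    intro a b hab heq
    have h1 : chain f b ⊆ gmap f (chain f a) :=
      (chain_antitone (Order.succ_le_of_lt hab)).trans (chain_succ_subset f a)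
    have h2 : chain f a ⊆ closure (dset f (chain f a)) := by
      intro x hx
      exact (h1 (heq ▸ hx)).2
    exact not_subset_closure_dset hwd (h a) h2
  apply Cardinal.not_injective_limitation_set (chain f)
  intro a _ b _ hab
  rcases lt_trichotomy a b with hl | he | hl
  · exact absurd (hlt a b hl hab) not_false
  · exact he
  · exact absurd (hlt b a hl hab.symm) not_false

theorem exists_fsigma (hperf : ∀ C : Set X, IsClosed C → IsGδ C)
    {O : Set X} (hO : IsOpen O) :
    ∃ K : ℕ → Set X, (∀ n, IsClosed (K n)) ∧ ⋃ n, K n = O := by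
  obtain ⟨T, hTo, hTc, hTeq⟩ := hperf Oᶜ hO.isClosed_compl
  obtain ⟨g, hg⟩ := (hTc.insert univ).exists_eq_range (insert_nonempty _ _)
  refine ⟨fun n => (g n)ᶜ, fun n => ?_, ?_⟩
  · have hmem : g n ∈ insert univ T := hg ▸ mem_range_self n
    rcases hmem with h | h
    · simp only [h, compl_univ]; exact isClosed_empty
    · exact (hTo _ h).isClosed_compl
  · have h1 : ⋂ n, g n = Oᶜ := by
      rw [← sInter_range, ← hg, sInter_insert, hTeq, univ_inter]
    rw [← compl_iInter, h1, compl_compl]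

theorem main_induction [ParacompactSpace X]
    (hperf : ∀ C : Set X, IsClosed C → IsGδ C) (f : X → Y) (a : Ordinal.{u}) :
    ∀ O : Set X, IsOpen O → O ∩ chain f a = ∅ →
      ∃ 𝒞 : Set (Set X), 𝒞.Countable ∧
        (∀ C ∈ 𝒞, IsClosed C ∧ C ⊆ O ∧ ContinuousOn f C) ∧ O ⊆ ⋃₀ 𝒞 := by
  induction a using Ordinal.induction with
  | _ a IH =>
  intro O hOopen hOdisj
  rcases Ordinal.zero_or_succ_or_isSuccLimit a with rfl | ⟨b, rfl⟩ | hlim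
  · -- zero case : chain f 0 = univ, so O = ∅
    have hO : O = ∅ := by
      rw [← hOdisj]
      refine (inter_eq_left.2 fun x _ => ?_).symm
      rw [mem_chain_iff]
      intro b hb
      exact absurd hb (not_lt_of_ge (zero_le (a := b)))
    refine ⟨∅, countable_empty, by simp, by simp [hO]⟩
  · -- successor case
    obtain ⟨K, hKcl, hKO⟩ := exists_fsigma hperf hOopen
    have hKsub : ∀ n, K n ⊆ O := fun n => hKO ▸ subset_iUnion K n
    -- the open part below level b
    obtain ⟨𝒞', h𝒞'c, h𝒞'prop, h𝒞'cov⟩ :=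
      IH b (Order.lt_succ b) (O ∩ (chain f b)ᶜ)
        (hOopen.inter (chain_isClosed f b).isOpen_compl)
        (by rw [inter_assoc, compl_inter_self, inter_empty])
    refine ⟨𝒞' ∪ range (fun n => K n ∩ chain f b),
      h𝒞'c.union (countable_range _), ?_, ?_⟩
    · rintro C (hC | ⟨n, rfl⟩)
      · obtain ⟨h1, h2, h3⟩ := h𝒞'prop C hC
        exact ⟨h1, h2.trans inter_subset_left, h3⟩
      · refine ⟨(hKcl n).inter (chain_isClosed f b), inter_subset_left.trans (hKsub n), ?_⟩
        intro x hx
        have hxO : x ∈ O := hKsub n hx.1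
        have hxs : x ∉ chain f (Order.succ b) := fun h =>
          (eq_empty_iff_forall_notMem.1 hOdisj x) ⟨hxO, h⟩
        have hcw : ContinuousWithinAt f (chain f b) x :=
          continuousWithinAt_of_not_mem_gmap hx.2 (not_mem_gmap_of_succ hx.2 hxs)
        exact hcw.mono inter_subset_right
    · intro x hx
      by_cases hxb : x ∈ chain f b
      · obtain ⟨n, hn⟩ : ∃ n, x ∈ K n := by
          have : x ∈ ⋃ n, K n := hKO ▸ hx
          exact mem_iUnion.1 this
        exact ⟨K n ∩ chain f b, Or.inr ⟨n, rfl⟩, hn, hxb⟩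
      · obtain ⟨C, hC, hxC⟩ := h𝒞'cov ⟨hx, hxb⟩
        exact ⟨C, Or.inl hC, hxC⟩
  · -- limit case
    obtain ⟨K, hKcl, hKO⟩ := exists_fsigma hperf hOopen
    have hKsub : ∀ n, K n ⊆ O := fun n => hKO ▸ subset_iUnion K n
    have hn : ∀ n : ℕ, ∃ E : ℕ → Set X,
        (∀ m, IsClosed (E m) ∧ E m ⊆ O ∧ ContinuousOn f (E m)) ∧ K n ⊆ ⋃ m, E m := by
      intro n
      have hcover : K n ⊆ ⋃ i : {b : Ordinal.{u} // b < a}, (gmap f (chain f i.1))ᶜ := by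
        intro x hx
        have hxa : x ∉ chain f a := fun h =>
          (eq_empty_iff_forall_notMem.1 hOdisj x) ⟨hKsub n hx, h⟩
        rw [mem_chain_iff] at hxa
        push_neg at hxa
        obtain ⟨b, hb, hnb⟩ := hxa
        exact mem_iUnion.2 ⟨⟨b, hb⟩, hnb⟩
      obtain ⟨v, hvo, hvcov, hvlf, hvsub⟩ :=
        precise_refinement_set (hKcl n)
          (fun i : {b : Ordinal.{u} // b < a} => (gmap f (chain f i.1))ᶜ)
          (fun i => (gmap_isClosed f (chain_isClosed f i.1)).isOpen_compl) hcover
      have hIH : ∀ i : {b : Ordinal.{u} // b < a}, ∃ g : ℕ → Set X,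
          (∀ m, IsClosed (g m) ∧ g m ⊆ v i ∧ ContinuousOn f (g m)) ∧ v i ⊆ ⋃ m, g m := by
        intro i
        have hdisj : v i ∩ chain f (Order.succ i.1) = ∅ := by
          rw [eq_empty_iff_forall_notMem]
          rintro x ⟨hxv, hxc⟩
          exact (hvsub i hxv) (chain_succ_subset f i.1 hxc)
        obtain ⟨𝒞, hc, hprop, hcov⟩ :=
          IH (Order.succ i.1) (hlim.succ_lt i.2) (v i) (hvo i) hdisj
        obtain ⟨g, hg⟩ := (hc.insert ∅).exists_eq_range (insert_nonempty _ _)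
        refine ⟨g, fun m => ?_, fun x hx => ?_⟩
        · have hmem : g m ∈ insert ∅ 𝒞 := hg ▸ mem_range_self m
          rcases hmem with h | h
          · rw [h]; exact ⟨isClosed_empty, empty_subset _, continuousOn_empty f⟩
          · exact hprop _ h
        · obtain ⟨C, hC, hxC⟩ := hcov hx
          have : C ∈ range g := hg ▸ mem_insert_of_mem _ hC
          obtain ⟨m, rfl⟩ := this
          exact mem_iUnion.2 ⟨m, hxC⟩
      choose g hg1 hg2 using hIH
      refine ⟨fun m => ⋃ i, (g i m ∩ K n), fun m => ?_, fun x hx => ?_⟩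
      · have hlf : LocallyFinite (fun i => g i m ∩ K n) :=
          hvlf.subset fun i => inter_subset_left.trans (hg1 i m).2.1
        have hclosed : ∀ i, IsClosed (g i m ∩ K n) := fun i => (hg1 i m).1.inter (hKcl n)
        refine ⟨hlf.isClosed_iUnion hclosed,
          iUnion_subset fun i => inter_subset_right.trans (hKsub n),
          hlf.continuousOn_iUnion hclosed fun i => ((hg1 i m).2.2).mono inter_subset_left⟩
      · obtain ⟨i, hi⟩ := mem_iUnion.1 (hvcov hx)
        obtain ⟨m, hm⟩ := mem_iUnion.1 (hg2 i hi)
        exact mem_iUnion.2 ⟨m, mem_iUnion.2 ⟨i, hm, hx⟩⟩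
    choose E hE1 hE2 using hn
    refine ⟨⋃ n : ℕ, range (E n), countable_iUnion (fun n => countable_range _), ?_, ?_⟩
    · rintro C hC
      obtain ⟨n, m, rfl⟩ : ∃ n m, E n m = C := by
        obtain ⟨s, ⟨n, rfl⟩, hs⟩ := hC
        obtain ⟨m, rfl⟩ := hs
        exact ⟨n, m, rfl⟩
      exact hE1 n m
    · intro x hx
      obtain ⟨n, hxn⟩ : ∃ n, x ∈ K n := mem_iUnion.1 (hKO ▸ hx)
      obtain ⟨m, hm⟩ := mem_iUnion.1 (hE2 n hxn)
      exact ⟨E n m, mem_iUnion.2 ⟨n, mem_range_self m⟩, hm⟩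

theorem piecewise_to_weakly (hhb : ∀ C : Set X, IsClosed C → BaireSpace C)
    {f : X → Y} (hpc : PiecewiseContinuous f) : WeaklyDiscontinuous f := by
  obtain ⟨𝒞, h𝒞c, h𝒞cl, h𝒞u, h𝒞f⟩ := hpc
  intro A hA
  rw [IsNowhereDense]
  by_contra hne
  obtain ⟨b, hb⟩ := nonempty_iff_ne_empty.2 hne
  obtain ⟨t, htsub, hto, hbt⟩ := mem_interior.1 hb
  obtain ⟨V, hVo, hVt⟩ := isOpen_induced_iff.1 hto
  have hbV : (b : X) ∈ V := by
    have : b ∈ Subtype.val ⁻¹' V := hVt ▸ hbt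
    exact this
  set B : Set X := V ∩ A with hBdef
  set K : Set X := closure B with hKdef
  haveI : BaireSpace K := hhb K isClosed_closure
  haveI : Nonempty K := ⟨⟨b.1, subset_closure ⟨hbV, b.2⟩⟩⟩
  haveI : Countable ↥𝒞 := h𝒞c.to_subtype
  have hcover : ⋃ C : ↥𝒞, (Subtype.val ⁻¹' (C : Set X) : Set K) = univ := by
    rw [eq_univ_iff_forall]
    intro k
    have : (k : X) ∈ ⋃₀ 𝒞 := h𝒞u ▸ mem_univ _
    obtain ⟨C, hC, hkC⟩ := this
    exact mem_iUnion.2 ⟨⟨C, hC⟩, hkC⟩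
  obtain ⟨C, hCint⟩ := nonempty_interior_of_iUnion_of_closed
    (fun C : ↥𝒞 => (h𝒞cl C C.2).preimage continuous_subtype_val) hcover
  obtain ⟨k, hk⟩ := hCint
  obtain ⟨W, hWo, hWeq⟩ := isOpen_induced_iff.1 (isOpen_interior
    (s := (Subtype.val ⁻¹' (C : Set X) : Set K)))
  have hkW : (k : X) ∈ W := by
    have : k ∈ Subtype.val ⁻¹' W := hWeq ▸ hk
    exact this
  have hWK : ∀ z : X, z ∈ W → z ∈ K → z ∈ (C : Set X) := by
    intro z hzW hzK
    have h1 : (⟨z, hzK⟩ : K) ∈ Subtype.val ⁻¹' W := hzW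
    have h2 : (⟨z, hzK⟩ : K) ∈ interior (Subtype.val ⁻¹' (C : Set X) : Set K) := hWeq ▸ h1
    exact (interior_subset (s := (Subtype.val ⁻¹' (C : Set X) : Set K))) h2
  have hWB : (W ∩ B).Nonempty := by
    have hkcl : (k : X) ∈ closure B := k.2
    rw [mem_closure_iff] at hkcl
    obtain ⟨z, hz⟩ := hkcl W hWo hkW
    exact ⟨z, hz⟩
  obtain ⟨z0, hz0W, hz0B⟩ := hWB
  have hcont : ∀ y : X, y ∈ W → y ∈ B → ContinuousWithinAt f A y := by
    intro y hyW hyB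
    have h1 : ContinuousWithinAt f (C : Set X) y :=
      h𝒞f C C.2 y (hWK y hyW (subset_closure hyB))
    have hsub : A ∩ (W ∩ V) ⊆ (C : Set X) := by
      rintro z ⟨hzA, hzW, hzV⟩
      exact hWK z hzW (subset_closure ⟨hzV, hzA⟩)
    have h2 : ContinuousWithinAt f (A ∩ (W ∩ V)) y := h1.mono hsub
    have hmem : W ∩ V ∈ 𝓝 y := (hWo.inter hVo).mem_nhds ⟨hyW, hyB.1⟩
    exact (continuousWithinAt_inter hmem).1 h2
  have hz0A : z0 ∈ A := hz0B.2
  have hmem : (⟨z0, hz0A⟩ : A) ∈ closure {a : A | ¬ ContinuousWithinAt f A (a : X)} := by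
    apply htsub
    rw [← hVt]
    exact hz0B.1
  rw [mem_closure_iff] at hmem
  obtain ⟨w, hw1, hw2⟩ := hmem (Subtype.val ⁻¹' (W ∩ V))
    (isOpen_induced_iff.2 ⟨W ∩ V, hWo.inter hVo, rfl⟩) ⟨hz0W, hz0B.1⟩
  exact hw2 (hcont w hw1.1 ⟨hw1.2, w.2⟩)

theorem weaklyDiscontinuous_iff_piecewiseContinuous'
    [ParacompactSpace X]
    (hperf : ∀ C : Set X, IsClosed C → IsGδ C)
    (hhb : ∀ C : Set X, IsClosed C → BaireSpace C)
    (f : X → Y) :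
    WeaklyDiscontinuous f ↔ PiecewiseContinuous f := by
  constructor
  · intro hwd
    obtain ⟨a, ha⟩ := exists_chain_empty hwd
    obtain ⟨𝒞, hc, hprop, hcov⟩ := main_induction hperf f a univ isOpen_univ
      (by rw [ha, inter_empty])
    exact ⟨𝒞, hc, fun c hc' => (hprop c hc').1, univ_subset_iff.1 hcov,
      fun c hc' => (hprop c hc').2.2⟩
  · exact piecewise_to_weakly hhb

end Aux

theorem weaklyDiscontinuous_iff_piecewiseContinuous
    {X Y : Type*} [TopologicalSpace X] [TopologicalSpace Y]
    [ParacompactSpace X]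
    (hperf : ∀ C : Set X, IsClosed C → IsGδ C)
    (hhb : ∀ C : Set X, IsClosed C → BaireSpace C)
    (f : X → Y) :
    WeaklyDiscontinuous f ↔ PiecewiseContinuous f :=
  weaklyDiscontinuous_iff_piecewiseContinuous' hperf hhb f
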